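/- Let A_Σ be the block diagonal matrix diag(A_1, ..., A_ρ) where each A_k is the constraint matrix of an assignment system with at most τ 'column-sum' constraints (as in the n-fold configuration-LP), and let ẑ be a solution to A_Σ z = b with integral right-hand side b. Let B_Σ be A_Σ restricted to the columns in the non-integral support of ẑ. Then nullity(B_Σ) ≥ |nisupp(ẑ)| / (2τ + 1). -/

import Mathlib

lemma aux_int_den {ι : Type*} [Fintype ι] [DecidableEq ι] (f : ι → ℚ)
    (hsum : (∑ i, f i).den = 1) (i : ι) (hi : (f i).den ≠ 1) :
    ∃ i', i' ≠ i ∧ (f i').den ≠ 1 := by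
  by_contra hcon
  push_neg at hcon
  apply hi
  have h1 : f i = (∑ i', f i') - ∑ i' ∈ Finset.univ.erase i, f i' := by
    rw [← Finset.add_sum_erase _ f (Finset.mem_univ i)]; ring
  have h2 : ∑ i' ∈ Finset.univ.erase i, f i'
      = ((∑ i' ∈ Finset.univ.erase i, (f i').num : ℤ) : ℚ) := by
    push_cast
    exact Finset.sum_congr rfl fun x hx =>
      ((Rat.den_eq_one_iff _).mp (hcon x (Finset.ne_of_mem_erase hx))).symm
  have h3 : f i = (((∑ i', f i').num - ∑ i' ∈ Finset.univ.erase i, (f i').num : ℤ) : ℚ) := by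
    rw [h1, h2]
    push_cast
    rw [(Rat.den_eq_one_iff _).mp hsum]
  rw [h3, Rat.den_intCast]

set_option maxHeartbeats 1600000 in
/-- Block-diagonal assignment system: the nullity of the constraint matrix restricted
to the non-integral support of a solution with integral right-hand sides is at least
`|nisupp| / (2τ + 1)`. -/
theorem stmt_6 {ρ τ : ℕ} (ℓ : Fin ρ → ℕ)
    (z : (Σ k : Fin ρ, Fin (ℓ k) × Fin τ) → ℚ) (y : (k : Fin ρ) → Fin τ → ℤ)
    (hrow : ∀ (k : Fin ρ) (i : Fin (ℓ k)), ∑ j : Fin τ, z ⟨k, (i, j)⟩ = 1)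
    (hcol : ∀ (k : Fin ρ) (j : Fin τ), ∑ i : Fin (ℓ k), z ⟨k, (i, j)⟩ = (y k j : ℚ))
    (S : Finset (Σ k : Fin ρ, Fin (ℓ k) × Fin τ))
    (hS : S = Finset.univ.filter (fun p => (z p).den ≠ 1))
    (B : Matrix (Σ k : Fin ρ, Fin (ℓ k) ⊕ Fin τ)
      {p : Σ k : Fin ρ, Fin (ℓ k) × Fin τ // p ∈ S} ℚ)
    (hB1 : ∀ (k : Fin ρ) (i : Fin (ℓ k)) (c),
      B ⟨k, Sum.inl i⟩ c =
        if (⟨k, i⟩ : Σ k' : Fin ρ, Fin (ℓ k')) = ⟨c.val.1, c.val.2.1⟩ then 1 else 0)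
    (hB2 : ∀ (k : Fin ρ) (j : Fin τ) (c),
      B ⟨k, Sum.inr j⟩ c = if k = c.val.1 ∧ j = c.val.2.2 then 1 else 0) :
    (S.card : ℚ) / (2 * τ + 1) ≤
      (Module.finrank ℚ ↥(LinearMap.ker B.mulVecLin) : ℚ) := by
  classical
  rcases Nat.eq_zero_or_pos τ with hτ0 | hτpos
  · subst hτ0
    have hSe : S.card = 0 := Finset.card_eq_zero.mpr
      (Finset.eq_empty_of_forall_notMem fun p _ => p.2.2.elim0)
    rw [hSe]
    norm_num
  -- degree bounds
  set Rset : Finset (Σ k : Fin ρ, Fin (ℓ k)) := S.image (fun p => ⟨p.1, p.2.1⟩) with hRset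
  set Tset : Finset (Fin ρ × Fin τ) := S.image (fun p => (p.1, p.2.2)) with hTset
  set KB : Finset (Fin ρ) := S.image (fun p => p.1) with hKB
  have hRdeg : 2 * Rset.card ≤ S.card := by
    have hfib : S.card = ∑ w ∈ Rset,
        (S.filter fun p => (⟨p.1, p.2.1⟩ : Σ k : Fin ρ, Fin (ℓ k)) = w).card :=
      Finset.card_eq_sum_card_fiberwise fun p hp => Finset.mem_image_of_mem _ hp
    have h2 : ∀ w ∈ Rset, 2 ≤
        (S.filter fun p => (⟨p.1, p.2.1⟩ : Σ k : Fin ρ, Fin (ℓ k)) = w).card := by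
      intro w hw
      obtain ⟨p, hpS, hpw⟩ := Finset.mem_image.mp hw
      obtain ⟨k, i, j⟩ := p
      have hz : (z ⟨k, (i, j)⟩).den ≠ 1 := by
        rw [hS] at hpS; exact (Finset.mem_filter.mp hpS).2
      have hsum : (∑ j' : Fin τ, z ⟨k, (i, j')⟩).den = 1 := by
        rw [hrow k i]; norm_num
      obtain ⟨j', hj'ne, hj'⟩ := aux_int_den (fun j' => z ⟨k, (i, j')⟩) hsum j hz
      have hbS : (⟨k, (i, j')⟩ : Σ k : Fin ρ, Fin (ℓ k) × Fin τ) ∈ S := by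
        rw [hS]; exact Finset.mem_filter.mpr ⟨Finset.mem_univ _, hj'⟩
      refine Finset.one_lt_card.mpr ⟨⟨k, (i, j)⟩, ?_, ⟨k, (i, j')⟩, ?_, ?_⟩
      · exact Finset.mem_filter.mpr ⟨hpS, hpw⟩
      · exact Finset.mem_filter.mpr ⟨hbS, hpw⟩
      · intro h
        apply hj'ne
        simpa using h.symm
    calc 2 * Rset.card = ∑ _w ∈ Rset, 2 := by rw [Finset.sum_const, smul_eq_mul, mul_comm]
      _ ≤ _ := Finset.sum_le_sum h2
      _ = S.card := hfib.symm
  have hTdeg : 2 * Tset.card ≤ S.card := by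
    have hfib : S.card = ∑ w ∈ Tset, (S.filter fun p => (p.1, p.2.2) = w).card :=
      Finset.card_eq_sum_card_fiberwise fun p hp => Finset.mem_image_of_mem _ hp
    have h2 : ∀ w ∈ Tset, 2 ≤ (S.filter fun p => (p.1, p.2.2) = w).card := by
      intro w hw
      obtain ⟨p, hpS, hpw⟩ := Finset.mem_image.mp hw
      obtain ⟨k, i, j⟩ := p
      have hz : (z ⟨k, (i, j)⟩).den ≠ 1 := by
        rw [hS] at hpS; exact (Finset.mem_filter.mp hpS).2
      have hsum : (∑ i' : Fin (ℓ k), z ⟨k, (i', j)⟩).den = 1 := by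
        rw [hcol k j]; exact Rat.den_intCast _
      obtain ⟨i', hi'ne, hi'⟩ := aux_int_den (fun i' => z ⟨k, (i', j)⟩) hsum i hz
      have hbS : (⟨k, (i', j)⟩ : Σ k : Fin ρ, Fin (ℓ k) × Fin τ) ∈ S := by
        rw [hS]; exact Finset.mem_filter.mpr ⟨Finset.mem_univ _, hi'⟩
      refine Finset.one_lt_card.mpr ⟨⟨k, (i, j)⟩, ?_, ⟨k, (i', j)⟩, ?_, ?_⟩
      · exact Finset.mem_filter.mpr ⟨hpS, hpw⟩
      · exact Finset.mem_filter.mpr ⟨hbS, hpw⟩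
      · intro h
        apply hi'ne
        simpa using h.symm
    calc 2 * Tset.card = ∑ _w ∈ Tset, 2 := by rw [Finset.sum_const, smul_eq_mul, mul_comm]
      _ ≤ _ := Finset.sum_le_sum h2
      _ = S.card := hfib.symm
  have hTKB : Tset.card ≤ KB.card * τ := by
    have hsub : Tset ⊆ KB ×ˢ Finset.univ := by
      intro w hw
      obtain ⟨p, hpS, hpw⟩ := Finset.mem_image.mp hw
      rw [Finset.mem_product]
      subst hpw
      exact ⟨Finset.mem_image_of_mem _ hpS, Finset.mem_univ _⟩
    calc Tset.card ≤ (KB ×ˢ (Finset.univ : Finset (Fin τ))).card := Finset.card_le_card hsub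
      _ = KB.card * τ := by rw [Finset.card_product, Finset.card_univ, Fintype.card_fin]
  -- key evaluation of the transpose action
  have key : ∀ (v : (Σ k : Fin ρ, Fin (ℓ k) ⊕ Fin τ) → ℚ) (c),
      (B.transpose.mulVecLin v) c
        = v ⟨c.val.1, Sum.inl c.val.2.1⟩ + v ⟨c.val.1, Sum.inr c.val.2.2⟩ := by
    intro v c
    have h0 : (B.transpose.mulVecLin v) c = ∑ w, B w c * v w := by
      simp [Matrix.mulVecLin, Matrix.mulVec, dotProduct, Matrix.transpose_apply, Matrix.vecMul, mul_comm]
    rw [h0, ← Finset.univ_sigma_univ, Finset.sum_sigma]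
    simp_rw [Fintype.sum_sum_type]
    rw [Finset.sum_add_distrib]
    congr 1
    · have h1 : ∀ (k : Fin ρ) (i : Fin (ℓ k)), B ⟨k, Sum.inl i⟩ c * v ⟨k, Sum.inl i⟩
          = if (⟨k, i⟩ : Σ k' : Fin ρ, Fin (ℓ k')) = ⟨c.val.1, c.val.2.1⟩
            then v ⟨k, Sum.inl i⟩ else 0 := by
        intro k i; rw [hB1]; split <;> simp
      simp_rw [h1]
      rw [Finset.sum_sigma', Finset.univ_sigma_univ]
      simp [Sigma.eta]
    · have h2 : ∀ (k : Fin ρ) (j : Fin τ), B ⟨k, Sum.inr j⟩ c * v ⟨k, Sum.inr j⟩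
          = if k = c.val.1 then (if j = c.val.2.2 then v ⟨k, Sum.inr j⟩ else 0) else 0 := by
        intro k j; rw [hB2]
        by_cases h1 : k = c.val.1 <;> by_cases h2 : j = c.val.2.2 <;> simp [h1, h2]
      simp_rw [h2]
      simp
  -- touched vertices
  set touchedF : Finset (Σ k : Fin ρ, Fin (ℓ k) ⊕ Fin τ) :=
    Rset.image (fun w => ⟨w.1, Sum.inl w.2⟩) ∪ Tset.image (fun w => ⟨w.1, Sum.inr w.2⟩)
    with htouchedF
  have htc : touchedF.card ≤ Rset.card + Tset.card := by
    calc touchedF.card ≤ (Rset.image (fun w => ⟨w.1, Sum.inl w.2⟩) :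
          Finset (Σ k : Fin ρ, Fin (ℓ k) ⊕ Fin τ)).card
        + (Tset.image (fun w => ⟨w.1, Sum.inr w.2⟩) :
          Finset (Σ k : Fin ρ, Fin (ℓ k) ⊕ Fin τ)).card := Finset.card_union_le _ _
      _ ≤ Rset.card + Tset.card := by
          gcongr <;> exact Finset.card_image_le
  have hmemL : ∀ c : {p : Σ k : Fin ρ, Fin (ℓ k) × Fin τ // p ∈ S},
      (⟨c.val.1, Sum.inl c.val.2.1⟩ : Σ k : Fin ρ, Fin (ℓ k) ⊕ Fin τ) ∈ touchedF := fun c =>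
    Finset.mem_union_left _ (Finset.mem_image_of_mem _ (Finset.mem_image_of_mem _ c.property))
  have hmemR : ∀ c : {p : Σ k : Fin ρ, Fin (ℓ k) × Fin τ // p ∈ S},
      (⟨c.val.1, Sum.inr c.val.2.2⟩ : Σ k : Fin ρ, Fin (ℓ k) ⊕ Fin τ) ∈ touchedF := fun c =>
    Finset.mem_union_right _ (Finset.mem_image_of_mem _ (Finset.mem_image_of_mem _ c.property))
  -- the linearly independent family in the left kernel
  let u : ({w : Σ k : Fin ρ, Fin (ℓ k) ⊕ Fin τ // w ∉ touchedF} ⊕ {k : Fin ρ // k ∈ KB}) →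
      ((Σ k : Fin ρ, Fin (ℓ k) ⊕ Fin τ) → ℚ) := fun i =>
    match i with
    | Sum.inl w0 => Pi.single w0.val 1
    | Sum.inr kk => fun w =>
        match w with
        | ⟨k', Sum.inl _⟩ => if k' = kk.val then 1 else 0
        | ⟨k', Sum.inr _⟩ => if k' = kk.val then -1 else 0
  have hu_inl : ∀ w0, u (Sum.inl w0) = Pi.single w0.val 1 := fun _ => rfl
  have hu_inr_l : ∀ kk (k' : Fin ρ) (i : Fin (ℓ k')),
      u (Sum.inr kk) ⟨k', Sum.inl i⟩ = if k' = kk.val then 1 else 0 := fun _ _ _ => rfl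
  have hu_inr_r : ∀ kk (k' : Fin ρ) (j : Fin τ),
      u (Sum.inr kk) ⟨k', Sum.inr j⟩ = if k' = kk.val then -1 else 0 := fun _ _ _ => rfl
  have hker : ∀ i, u i ∈ LinearMap.ker B.transpose.mulVecLin := by
    intro i
    rw [LinearMap.mem_ker]
    funext c
    rw [key (u i) c]
    simp only [Pi.zero_apply]
    rcases i with ⟨w0, hw0⟩ | ⟨k, hk⟩
    · have hne1 : (⟨c.val.1, Sum.inl c.val.2.1⟩ : Σ k : Fin ρ, Fin (ℓ k) ⊕ Fin τ)
          ≠ w0 := fun h => hw0 (h ▸ hmemL c)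
      have hne2 : (⟨c.val.1, Sum.inr c.val.2.2⟩ : Σ k : Fin ρ, Fin (ℓ k) ⊕ Fin τ)
          ≠ w0 := fun h => hw0 (h ▸ hmemR c)
      rw [hu_inl, Pi.single_eq_of_ne hne1 1, Pi.single_eq_of_ne hne2 1]
      norm_num
    · show (if c.val.1 = k then (1:ℚ) else 0) + (if c.val.1 = k then (-1:ℚ) else 0) = 0
      split <;> norm_num
  have hindep : LinearIndependent ℚ u := by
    rw [Fintype.linearIndependent_iff]
    intro g hg
    have heval : ∀ w, ∑ i, g i * u i w = 0 := by
      intro w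
      have := congrFun hg w
      simpa [Finset.sum_apply] using this
    have hKBz : ∀ kk : {k : Fin ρ // k ∈ KB}, g (Sum.inr kk) = 0 := by
      rintro ⟨k, hk⟩
      obtain ⟨p, hpS, hpk⟩ := Finset.mem_image.mp hk
      have hvt : (⟨p.1, Sum.inr p.2.2⟩ : Σ k : Fin ρ, Fin (ℓ k) ⊕ Fin τ) ∈ touchedF :=
        hmemR ⟨p, hpS⟩
      have heq := heval ⟨p.1, Sum.inr p.2.2⟩
      rw [Fintype.sum_sum_type] at heq
      have hz1 : ∑ w0 : {w // w ∉ touchedF},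
          g (Sum.inl w0) * u (Sum.inl w0) ⟨p.1, Sum.inr p.2.2⟩ = 0 := by
        refine Finset.sum_eq_zero fun w0 _ => ?_
        have hne : (⟨p.1, Sum.inr p.2.2⟩ : Σ k : Fin ρ, Fin (ℓ k) ⊕ Fin τ) ≠ w0.val :=
          fun h => w0.property (h ▸ hvt)
        rw [hu_inl, Pi.single_eq_of_ne hne 1, mul_zero]
      rw [hz1, zero_add] at heq
      have hsingle : ∑ kk' : {k : Fin ρ // k ∈ KB},
          g (Sum.inr kk') * u (Sum.inr kk') ⟨p.1, Sum.inr p.2.2⟩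
          = - g (Sum.inr ⟨k, hk⟩) := by
        rw [Finset.sum_eq_single (⟨k, hk⟩ : {k : Fin ρ // k ∈ KB})]
        · show g (Sum.inr ⟨k, hk⟩) * (if p.1 = k then (-1:ℚ) else 0)
            = - g (Sum.inr ⟨k, hk⟩)
          simp [hpk]
        · intro b _ hbne
          show g (Sum.inr b) * (if p.1 = (b : Fin ρ) then (-1:ℚ) else 0) = 0
          have hne : p.1 ≠ (b : Fin ρ) := by
            rw [hpk]
            exact fun h => hbne (Subtype.ext h.symm)
          rw [if_neg hne, mul_zero]
        · intro h; exact absurd (Finset.mem_univ _) h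
      rw [hsingle] at heq
      linarith
    intro i
    rcases i with ⟨w0, hw0⟩ | kk
    · have heq := heval w0
      rw [Fintype.sum_sum_type] at heq
      have hz2 : ∑ kk' : {k : Fin ρ // k ∈ KB},
          g (Sum.inr kk') * u (Sum.inr kk') w0 = 0 :=
        Finset.sum_eq_zero fun kk' _ => by rw [hKBz kk', zero_mul]
      rw [hz2, add_zero] at heq
      rw [Finset.sum_eq_single (⟨w0, hw0⟩ :
        {w : Σ k : Fin ρ, Fin (ℓ k) ⊕ Fin τ // w ∉ touchedF})] at heq
      · rw [hu_inl] at heq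
        simpa using heq
      · intro b _ hbne
        rw [hu_inl]
        have hne : w0 ≠ b.val := fun h => hbne (Subtype.ext h.symm)
        rw [Pi.single_eq_of_ne hne 1, mul_zero]
      · intro h; exact absurd (Finset.mem_univ _) h
    · exact hKBz kk
  -- nullity of the transpose
  have hcardle : Fintype.card
      ({w : Σ k : Fin ρ, Fin (ℓ k) ⊕ Fin τ // w ∉ touchedF} ⊕ {k : Fin ρ // k ∈ KB})
      ≤ Module.finrank ℚ ↥(LinearMap.ker B.transpose.mulVecLin) := by
    have hindep' : LinearIndependent ℚ
        (fun i => (⟨u i, hker i⟩ : ↥(LinearMap.ker B.transpose.mulVecLin))) :=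
      LinearIndependent.of_comp (LinearMap.ker B.transpose.mulVecLin).subtype hindep
    exact hindep'.fintype_card_le_finrank
  have hcardeq : Fintype.card
      ({w : Σ k : Fin ρ, Fin (ℓ k) ⊕ Fin τ // w ∉ touchedF} ⊕ {k : Fin ρ // k ∈ KB})
      = (Fintype.card (Σ k : Fin ρ, Fin (ℓ k) ⊕ Fin τ) - touchedF.card) + KB.card := by
    rw [Fintype.card_sum, Fintype.card_subtype_compl, Fintype.card_coe, Fintype.card_coe]
  -- rank-nullity
  have hrn1 : B.rank + Module.finrank ℚ ↥(LinearMap.ker B.mulVecLin) = S.card := by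
    have h := LinearMap.finrank_range_add_finrank_ker B.mulVecLin
    rw [Module.finrank_pi, Fintype.card_coe] at h
    exact h
  have hrn2 : B.transpose.rank + Module.finrank ℚ ↥(LinearMap.ker B.transpose.mulVecLin)
      = Fintype.card (Σ k : Fin ρ, Fin (ℓ k) ⊕ Fin τ) := by
    have h := LinearMap.finrank_range_add_finrank_ker B.transpose.mulVecLin
    rw [Module.finrank_pi] at h
    exact h
  have htr : B.transpose.rank = B.rank := Matrix.rank_transpose B
  -- combine in ℕ
  have hmain : S.card + KB.card ≤
      Module.finrank ℚ ↥(LinearMap.ker B.mulVecLin) + Rset.card + Tset.card := by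
    have h1 : touchedF.card ≤ Fintype.card (Σ k : Fin ρ, Fin (ℓ k) ⊕ Fin τ) :=
      Finset.card_le_univ _
    omega
  -- final arithmetic in ℚ
  rw [div_le_iff₀ (by positivity)]
  have hq : (S.card : ℚ) + KB.card ≤
      (Module.finrank ℚ ↥(LinearMap.ker B.mulVecLin) : ℚ) + Rset.card + Tset.card := by
    exact_mod_cast hmain
  have hq1 : 2 * (Rset.card : ℚ) ≤ S.card := by exact_mod_cast hRdeg
  have hq2 : 2 * (Tset.card : ℚ) ≤ S.card := by exact_mod_cast hTdeg
  have hq3 : (Tset.card : ℚ) ≤ KB.card * τ := by exact_mod_cast hTKB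
  have hq4 : (1 : ℚ) ≤ τ := by exact_mod_cast hτpos
  have hNn : (0 : ℚ) ≤ (Module.finrank ℚ ↥(LinearMap.ker B.mulVecLin) : ℚ) :=
    Nat.cast_nonneg _
  set N : ℚ := (Module.finrank ℚ ↥(LinearMap.ker B.mulVecLin) : ℚ)
  set e : ℚ := (S.card : ℚ)
  set r : ℚ := (Rset.card : ℚ)
  set t : ℚ := (Tset.card : ℚ)
  set bl : ℚ := (KB.card : ℚ)
  have hcomb : (0:ℚ) ≤ 2*(τ:ℚ)*(N + r + t - e - bl) + (τ:ℚ)*(e - 2*r)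
      + 2*((τ:ℚ)*bl - t) + ((τ:ℚ) - 1)*(e - 2*t) := by
    have c1 : (0:ℚ) ≤ N + r + t - e - bl := by linarith
    have c2 : (0:ℚ) ≤ e - 2*r := by linarith
    have c3 : (0:ℚ) ≤ (τ:ℚ)*bl - t := by linarith
    have c4 : (0:ℚ) ≤ e - 2*t := by linarith
    have hτ0 : (0:ℚ) ≤ (τ:ℚ) := by linarith
    have := mul_nonneg (by linarith : (0:ℚ) ≤ 2*(τ:ℚ)) c1
    have := mul_nonneg hτ0 c2
    have := mul_nonneg (by linarith : (0:ℚ) ≤ ((τ:ℚ) - 1)) c4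
    nlinarith
  nlinarith [hcomb, hNn]
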